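/- Outermost lifting lemma: Let R be a rewrite system, s ∈ T(F,X), α a ground substitution such that αs is outermost-reducible at a non-variable position p of s, and Y ⊆ X a set of variables with Var(s) ∪ Dom(α) ⊆ Y. If αs rewrites outermost at position p with rule l→r to t', then there exist a term s' ∈ T(F,X) and substitutions β and σ = σ0 ∧ ⋀_{j=1..k} ¬σ_j such that: (1) s outermost-narrows to s' at position p with rule l→r and constrained substitution σ; (2) βs' = t'; (3) βσ0 = α on Y; and (4) β satisfies ⋀_{j=1..k} ¬σ_j; where σ0 is the most general unifier of s|_p and l and σ_1,…,σ_k are all most general unifiers of σ0(s|_{p'}) with a left-hand side of a rule of R, for all positions p' of s that are strict prefixes of p. -/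

import Mathlib

namespace TRS

inductive Term (F V : Type*) where
  | var : V → Term F V
  | app : F → List (Term F V) → Term F V

namespace Term

variable {F V : Type*}

mutual
  def subst (σ : V → Term F V) : Term F V → Term F V
    | .var x => σ x
    | .app f ts => .app f (substList σ ts)

  def substList (σ : V → Term F V) : List (Term F V) → List (Term F V)
    | [] => []
    | t :: ts => subst σ t :: substList σ ts
end

mutual
  def vars : Term F V → Set V
    | .var x => {x}
    | .app _ ts => varsList ts

  def varsList : List (Term F V) → Set V
    | [] => ∅
    | t :: ts => vars t ∪ varsList ts
end

def IsGround (t : Term F V) : Prop := vars t = ∅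

def top : Term F V → Option F
  | .var _ => none
  | .app f _ => some f

def subtermAt : List ℕ → Term F V → Option (Term F V)
  | [], t => some t
  | _ :: _, .var _ => none
  | i :: p, .app _ ts =>
    match ts[i]? with
    | none => none
    | some u => subtermAt p u

def replaceAt : List ℕ → Term F V → Term F V → Option (Term F V)
  | [], _, u => some u
  | _ :: _, .var _, _ => none
  | i :: p, .app f ts, u =>
    match ts[i]? with
    | none => none
    | some ti =>
      match replaceAt p ti u with
      | none => none
      | some ti' => some (.app f (ts.set i ti'))

inductive WF (arity : F → ℕ) : Term F V → Prop
  | var (x : V) : WF arity (.var x)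
  | app (f : F) (ts : List (Term F V)) :
      ts.length = arity f → (∀ t ∈ ts, WF arity t) → WF arity (.app f ts)

inductive Occurs (f : F) : Term F V → Prop
  | head (ts : List (Term F V)) : Occurs f (.app f ts)
  | arg {g : F} {ts : List (Term F V)} {t : Term F V} :
      t ∈ ts → Occurs f t → Occurs f (.app g ts)

end Term

open Term

structure Rule (F V : Type*) where
  lhs : Term F V
  rhs : Term F V

variable {F V : Type*}

/-- The domain of a substitution. -/
def SDom (σ : V → Term F V) : Set V := {x | σ x ≠ Term.var x}

/-- The range (variables) of a substitution. -/
def SRan (σ : V → Term F V) : Set V := ⋃ x ∈ SDom σ, vars (σ x)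

/-- A ground substitution maps every variable of its domain to a ground term. -/
def GroundSubst (σ : V → Term F V) : Prop := ∀ x ∈ SDom σ, IsGround (σ x)

/-- `R` is a rewrite system: no left-hand side is a variable, and
`Var(rhs) ⊆ Var(lhs)` for every rule. -/
def IsRS (R : List (Rule F V)) : Prop :=
  ∀ ρ ∈ R, (∀ x : V, ρ.lhs ≠ Term.var x) ∧ vars ρ.rhs ⊆ vars ρ.lhs

/-- Rewriting at position `p` with the rule `l → r`. -/
def RewriteAtWith (l r : Term F V) (p : List ℕ) (s t : Term F V) : Prop :=
  ∃ τ : V → Term F V, subtermAt p s = some (subst τ l) ∧ replaceAt p s (subst τ r) = some t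

/-- Rewriting at position `p` with some rule of `R`. -/
def RewriteAt (R : List (Rule F V)) (p : List ℕ) (s t : Term F V) : Prop :=
  ∃ ρ ∈ R, RewriteAtWith ρ.lhs ρ.rhs p s t

/-- The rewriting relation induced by `R`. -/
def Rewrite (R : List (Rule F V)) (s t : Term F V) : Prop :=
  ∃ p, RewriteAt R p s t

def ReducibleAt (R : List (Rule F V)) (s : Term F V) (p : List ℕ) : Prop :=
  ∃ t, RewriteAt R p s t

def Reducible (R : List (Rule F V)) (s : Term F V) : Prop :=
  ∃ t, Rewrite R s t

def NormalForm (R : List (Rule F V)) (s : Term F V) : Prop := ¬ Reducible R s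

/-- `n` is a normal form of `s`. -/
def IsNormalFormOf (R : List (Rule F V)) (s n : Term F V) : Prop :=
  Relation.ReflTransGen (Rewrite R) s n ∧ NormalForm R n

/-- `q` is strictly below `p` (`p` is a strict prefix of `q`). -/
def StrictBelow (p q : List ℕ) : Prop := p <+: q ∧ p ≠ q

/-- Innermost rewrite step at position `p`. -/
def InnAt (R : List (Rule F V)) (p : List ℕ) (s t : Term F V) : Prop :=
  RewriteAt R p s t ∧ ∀ q, StrictBelow p q → ¬ ReducibleAt R s q

def InnStep (R : List (Rule F V)) (s t : Term F V) : Prop := ∃ p, InnAt R p s t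

/-- Outermost rewrite step at position `p`. -/
def OutAt (R : List (Rule F V)) (p : List ℕ) (s t : Term F V) : Prop :=
  RewriteAt R p s t ∧ ∀ q, StrictBelow q p → ¬ ReducibleAt R s q

def OutStep (R : List (Rule F V)) (s t : Term F V) : Prop := ∃ p, OutAt R p s t

/-- Innermost rewrite step at position `p` with rule `l → r`. -/
def InnAtWith (R : List (Rule F V)) (l r : Term F V) (p : List ℕ) (s t : Term F V) : Prop :=
  RewriteAtWith l r p s t ∧ ∀ q, StrictBelow p q → ¬ ReducibleAt R s q

/-- Outermost rewrite step at position `p` with rule `l → r`. -/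
def OutAtWith (R : List (Rule F V)) (l r : Term F V) (p : List ℕ) (s t : Term F V) : Prop :=
  RewriteAtWith l r p s t ∧ ∀ q, StrictBelow q p → ¬ ReducibleAt R s q

/-- No infinite innermost derivation starts from `t`. -/
def InnTerminates (R : List (Rule F V)) (t : Term F V) : Prop :=
  ¬ ∃ f : ℕ → Term F V, f 0 = t ∧ ∀ n, InnStep R (f n) (f (n + 1))

/-- No infinite outermost derivation starts from `t`. -/
def OutTerminates (R : List (Rule F V)) (t : Term F V) : Prop :=
  ¬ ∃ f : ℕ → Term F V, f 0 = t ∧ ∀ n, OutStep R (f n) (f (n + 1))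

def Unifies (σ : V → Term F V) (u v : Term F V) : Prop := subst σ u = subst σ v

/-- `σ` is a most general unifier of `u` and `v`. -/
def IsMGU (u v : Term F V) (σ : V → Term F V) : Prop :=
  Unifies σ u v ∧
    ∀ τ : V → Term F V, Unifies τ u v → ∃ ρ : V → Term F V, ∀ x, subst ρ (σ x) = τ x

/-- The usable rules of a term (least set closed under the defining equations). -/
inductive Usable (R : List (Rule F V)) (XA : Set V) : Term F V → Rule F V → Prop
  | var {x : V} {ρ : Rule F V} : x ∉ XA → ρ ∈ R → Usable R XA (Term.var x) ρ
  | rls {f : F} {ts : List (Term F V)} {ρ : Rule F V} :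
      ρ ∈ R → Term.top ρ.lhs = some f → Usable R XA (Term.app f ts) ρ
  | arg {f : F} {ts : List (Term F V)} {t : Term F V} {ρ : Rule F V} :
      t ∈ ts → Usable R XA t ρ → Usable R XA (Term.app f ts) ρ
  | rhs {f : F} {ts : List (Term F V)} {ρ' ρ : Rule F V} :
      ρ' ∈ R → Term.top ρ'.lhs = some f → Usable R XA ρ'.rhs ρ → Usable R XA (Term.app f ts) ρ

/-! ### Auxiliary development -/

section Aux

open Term

@[simp] lemma subst_var (σ : V → Term F V) (x : V) : subst σ (Term.var x) = σ x := by
  simp [subst]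

lemma substList_eq_map (σ : V → Term F V) (ts : List (Term F V)) :
    substList σ ts = ts.map (subst σ) := by
  induction ts with
  | nil => simp [substList]
  | cons t ts ih => simp [substList, ih]

@[simp] lemma subst_app (σ : V → Term F V) (f : F) (ts : List (Term F V)) :
    subst σ (Term.app f ts) = Term.app f (ts.map (subst σ)) := by
  simp [subst, substList_eq_map]

/-- Custom induction principle for Term (nested inductive). -/
lemma Term.my_ind {motive : Term F V → Prop}
    (hv : ∀ x, motive (Term.var x))
    (ha : ∀ (f : F) (ts : List (Term F V)), (∀ t ∈ ts, motive t) → motive (Term.app f ts)) :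
    ∀ t, motive t := by
  intro t
  induction t using Term.rec (motive_2 := fun ts => ∀ u ∈ ts, motive u) with
  | var x => exact hv x
  | app f ts ih => exact ha f ts ih
  | nil => rename_i u hu; cases hu
  | cons head tail h1 h2 =>
      rename_i u hu
      rcases List.mem_cons.mp hu with h | h
      · exact h ▸ h1
      · exact h2 u h

@[simp] lemma vars_var (x : V) : vars (F := F) (Term.var x) = {x} := by simp [vars]

lemma mem_varsList {x : V} {ts : List (Term F V)} :
    x ∈ varsList ts ↔ ∃ t ∈ ts, x ∈ vars t := by
  induction ts with
  | nil => simp [varsList]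
  | cons t ts ih =>
      simp only [varsList, Set.mem_union, ih, List.mem_cons]
      constructor
      · rintro (h | ⟨u, hu, hx⟩)
        · exact ⟨t, Or.inl rfl, h⟩
        · exact ⟨u, Or.inr hu, hx⟩
      · rintro ⟨u, (rfl | hu), hx⟩
        · exact Or.inl hx
        · exact Or.inr ⟨u, hu, hx⟩

lemma vars_app (f : F) (ts : List (Term F V)) : vars (Term.app f ts) = varsList ts := by
  simp [vars]

lemma subst_subst (θ δ : V → Term F V) (t : Term F V) :
    subst θ (subst δ t) = subst (fun x => subst θ (δ x)) t := by
  induction t using Term.my_ind with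
  | hv x => simp
  | ha f ts ih =>
      simp only [subst_app, List.map_map]
      congr 1
      exact List.map_congr_left fun u hu => ih u hu

lemma subst_congr {θ δ : V → Term F V} {t : Term F V}
    (h : ∀ x ∈ vars t, θ x = δ x) : subst θ t = subst δ t := by
  induction t using Term.my_ind with
  | hv x => simpa using h x (by simp)
  | ha f ts ih =>
      simp only [subst_app]
      congr 1
      refine List.map_congr_left fun u hu => ih u hu fun x hx => ?_
      exact h x (by rw [vars_app]; exact mem_varsList.mpr ⟨u, hu, hx⟩)

lemma subst_id (t : Term F V) : subst Term.var t = t := by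
  induction t using Term.my_ind with
  | hv x => simp
  | ha f ts ih =>
      simp only [subst_app]
      congr 1
      calc ts.map (subst Term.var) = ts.map id := List.map_congr_left fun u hu => ih u hu
      _ = ts := List.map_id ts

lemma subst_eq_self {θ : V → Term F V} {t : Term F V}
    (h : ∀ x ∈ vars t, θ x = Term.var x) : subst θ t = t := by
  rw [subst_congr h, subst_id]

lemma vars_finite (t : Term F V) : (vars t).Finite := by
  induction t using Term.my_ind with
  | hv x => simp
  | ha f ts ih =>
      rw [vars_app]
      induction ts with
      | nil => simp [varsList]
      | cons u us ihl =>
          simp only [varsList]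
          exact (ih u (by simp)).union (ihl fun v hv => ih v (List.mem_cons_of_mem _ hv))

lemma vars_subst_subset (θ : V → Term F V) (t : Term F V) :
    vars (subst θ t) ⊆ ⋃ x ∈ vars t, vars (θ x) := by
  induction t using Term.my_ind with
  | hv x => simp
  | ha f ts ih =>
      intro y hy
      rw [subst_app, vars_app] at hy
      rcases mem_varsList.mp hy with ⟨u, hu, hyu⟩
      rcases List.mem_map.mp hu with ⟨v, hv, rfl⟩
      rcases Set.mem_iUnion₂.mp (ih v hv hyu) with ⟨x, hx, hyx⟩
      exact Set.mem_iUnion₂.mpr ⟨x, by rw [vars_app]; exact mem_varsList.mpr ⟨v, hv, hx⟩, hyx⟩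

/-! #### Size -/

mutual
  def tsize : Term F V → ℕ
    | .var _ => 1
    | .app _ ts => 1 + tsizeList ts

  def tsizeList : List (Term F V) → ℕ
    | [] => 0
    | t :: ts => tsize t + tsizeList ts
end

lemma tsize_pos (t : Term F V) : 1 ≤ tsize t := by
  cases t <;> simp [tsize]

lemma tsize_le_of_mem {t : Term F V} {ts : List (Term F V)} (h : t ∈ ts) :
    tsize t ≤ tsizeList ts := by
  induction ts with
  | nil => cases h
  | cons u us ih =>
      rcases List.mem_cons.mp h with rfl | h
      · simp [tsizeList]
      · have := ih h; simp only [tsizeList]; omega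

lemma le_tsize_subst {x : V} {t : Term F V} (θ : V → Term F V) (h : x ∈ vars t) :
    tsize (θ x) ≤ tsize (subst θ t) := by
  induction t using Term.my_ind with
  | hv y => simp at h; subst h; simp
  | ha f ts ih =>
      rw [vars_app] at h
      rcases mem_varsList.mp h with ⟨u, hu, hx⟩
      have h1 := ih u hu hx
      have h2 : tsize (subst θ u) ≤ tsizeList (ts.map (subst θ)) :=
        tsize_le_of_mem (List.mem_map.mpr ⟨u, hu, rfl⟩)
      simp only [subst_app, tsize]
      omega

lemma lt_tsize_subst {x : V} {f : F} {ts : List (Term F V)} (θ : V → Term F V)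
    (h : x ∈ vars (Term.app f ts)) :
    tsize (θ x) < tsize (subst θ (Term.app f ts)) := by
  rw [vars_app] at h
  rcases mem_varsList.mp h with ⟨u, hu, hx⟩
  have h1 := le_tsize_subst θ hx
  have h2 : tsize (subst θ u) ≤ tsizeList (ts.map (subst θ)) :=
    tsize_le_of_mem (List.mem_map.mpr ⟨u, hu, rfl⟩)
  simp only [subst_app, tsize]
  omega

lemma mem_of_getElem?' {α : Type*} {ts : List α} {i : ℕ} {t : α} (h : ts[i]? = some t) :
    t ∈ ts := by
  obtain ⟨hl, rfl⟩ := List.getElem?_eq_some_iff.mp h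
  exact List.getElem_mem hl

/-! #### Positions -/

lemma subtermAt_subst {p : List ℕ} {s sp : Term F V} (α : V → Term F V)
    (h : subtermAt p s = some sp) :
    subtermAt p (subst α s) = some (subst α sp) := by
  induction p generalizing s with
  | nil => simp [subtermAt] at h ⊢; rw [h]
  | cons i q ih =>
      cases s with
      | var x => simp [subtermAt] at h
      | app f ts =>
          simp only [subtermAt] at h
          cases hti : ts[i]? with
          | none => rw [hti] at h; simp at h
          | some ti =>
              rw [hti] at h
              simp only [subst, subtermAt, substList_eq_map, List.getElem?_map, hti,
                Option.map_some]
              exact ih h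

lemma vars_subtermAt {p : List ℕ} {s sp : Term F V}
    (h : subtermAt p s = some sp) : vars sp ⊆ vars s := by
  induction p generalizing s with
  | nil => simp [subtermAt] at h; rw [h]
  | cons i q ih =>
      cases s with
      | var x => simp [subtermAt] at h
      | app f ts =>
          simp only [subtermAt] at h
          cases hti : ts[i]? with
          | none => rw [hti] at h; simp at h
          | some ti =>
              rw [hti] at h
              refine (ih h).trans ?_
              rw [vars_app]
              intro x hx
              exact mem_varsList.mpr ⟨ti, mem_of_getElem?' hti, hx⟩

lemma replaceAt_isSome {p : List ℕ} {s sp : Term F V}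
    (h : subtermAt p s = some sp) (u : Term F V) :
    ∃ w, replaceAt p s u = some w := by
  induction p generalizing s u with
  | nil => exact ⟨u, rfl⟩
  | cons i q ih =>
      cases s with
      | var x => simp [subtermAt] at h
      | app f ts =>
          simp only [subtermAt] at h
          cases hti : ts[i]? with
          | none => rw [hti] at h; simp at h
          | some ti =>
              rw [hti] at h
              rcases ih h u with ⟨w, hw⟩
              exact ⟨Term.app f (ts.set i w), by simp [replaceAt, hti, hw]⟩

lemma replaceAt_subst {p : List ℕ} {s u w : Term F V} (α : V → Term F V)
    (h : replaceAt p s u = some w) :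
    replaceAt p (subst α s) (subst α u) = some (subst α w) := by
  induction p generalizing s w with
  | nil => simp [replaceAt] at h ⊢; rw [h]
  | cons i q ih =>
      cases s with
      | var x => simp [replaceAt] at h
      | app f ts =>
          simp only [replaceAt] at h
          cases hti : ts[i]? with
          | none => rw [hti] at h; simp at h
          | some ti =>
              rw [hti] at h
              simp only at h
              cases hri : replaceAt q ti u with
              | none => rw [hri] at h; simp at h
              | some ti' =>
                  rw [hri] at h
                  simp only [Option.some.injEq] at h
                  subst h
                  simp only [subst, replaceAt, substList_eq_map, List.getElem?_map, hti,
                    Option.map_some, ih hri, List.map_set]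

/-! #### Unification -/

/-- Simultaneous unification of a list of equations. -/
def UnifiesE (θ : V → Term F V) (E : List (Term F V × Term F V)) : Prop :=
  ∀ e ∈ E, subst θ e.1 = subst θ e.2

def IsMGUE (E : List (Term F V × Term F V)) (σ : V → Term F V) : Prop :=
  UnifiesE σ E ∧ ∀ τ, UnifiesE τ E → ∃ ρ, ∀ x, subst ρ (σ x) = τ x

def EVars (E : List (Term F V × Term F V)) : Set V :=
  {x | ∃ e ∈ E, x ∈ vars e.1 ∨ x ∈ vars e.2}

def ESize (E : List (Term F V × Term F V)) : ℕ :=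
  (E.map fun e => tsize e.1 + tsize e.2).sum

@[simp] lemma EVars_nil : EVars (F := F) (V := V) [] = ∅ := by
  ext x; simp [EVars]

lemma EVars_cons (e : Term F V × Term F V) (E : List (Term F V × Term F V)) :
    EVars (e :: E) = (vars e.1 ∪ vars e.2) ∪ EVars E := by
  ext x
  simp only [EVars, Set.mem_setOf_eq, List.mem_cons, Set.mem_union]
  constructor
  · rintro ⟨e', (rfl | he'), h⟩
    · exact Or.inl h
    · exact Or.inr ⟨e', he', h⟩
  · rintro (h | ⟨e', he', h⟩)
    · exact ⟨e, Or.inl rfl, h⟩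
    · exact ⟨e', Or.inr he', h⟩

lemma EVars_finite (E : List (Term F V × Term F V)) : (EVars E).Finite := by
  induction E with
  | nil => simp
  | cons e E ih =>
      rw [EVars_cons]
      exact (((vars_finite e.1).union (vars_finite e.2)).union ih)

lemma EVars_mono {E E' : List (Term F V × Term F V)} (h : ∀ e ∈ E, e ∈ E') :
    EVars E ⊆ EVars E' := by
  rintro x ⟨e, he, hx⟩
  exact ⟨e, h e he, hx⟩

@[simp] lemma ESize_nil : ESize (F := F) (V := V) [] = 0 := rfl

lemma ESize_cons (e : Term F V × Term F V) (E : List (Term F V × Term F V)) :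
    ESize (e :: E) = tsize e.1 + tsize e.2 + ESize E := by
  simp [ESize]

lemma ESize_append (E E' : List (Term F V × Term F V)) :
    ESize (E ++ E') = ESize E + ESize E' := by
  simp [ESize]

lemma ESize_zip_le (us vs : List (Term F V)) :
    ESize (us.zip vs) ≤ tsizeList us + tsizeList vs := by
  induction us generalizing vs with
  | nil => simp
  | cons u us ih =>
      cases vs with
      | nil => simp
      | cons v vs =>
          have := ih vs
          simp only [List.zip_cons_cons, ESize_cons, tsizeList]
          omega

/-- occurrence check -/
lemma occurs_no_unifier {x : V} {v : Term F V} (hne : v ≠ Term.var x)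
    (hocc : x ∈ vars v) (θ : V → Term F V) : θ x ≠ subst θ v := by
  intro h
  cases v with
  | var y =>
      simp only [vars_var, Set.mem_singleton_iff] at hocc
      exact hne (by rw [hocc])
  | app f ts =>
      have := lt_tsize_subst (f := f) (ts := ts) θ hocc
      rw [← h] at this
      omega

open Classical in
/-- The substitution `[x ↦ v]`. -/
noncomputable def upd (x : V) (v : Term F V) : V → Term F V :=
  fun y => if y = x then v else Term.var y

@[simp] lemma upd_same (x : V) (v : Term F V) : upd x v x = v := by simp [upd]

lemma upd_ne {x y : V} (v : Term F V) (h : y ≠ x) : upd x v y = Term.var y := by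
  simp [upd, h]

lemma subst_upd {τ : V → Term F V} {x : V} {v : Term F V}
    (h : τ x = subst τ v) (w : Term F V) :
    subst τ (subst (upd x v) w) = subst τ w := by
  rw [subst_subst]
  apply subst_congr
  intro y _
  by_cases hy : y = x
  · subst hy; simp [h]
  · simp [upd_ne v hy]

/-- Mapping `[x ↦ v]` over a list of equations. -/
noncomputable def EUpd (x : V) (v : Term F V) (E : List (Term F V × Term F V)) :
    List (Term F V × Term F V) :=
  E.map fun e => (subst (upd x v) e.1, subst (upd x v) e.2)

lemma unifiesE_EUpd {τ : V → Term F V} {x : V} {v : Term F V}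
    {E : List (Term F V × Term F V)} (h : τ x = subst τ v) (hE : UnifiesE τ E) :
    UnifiesE τ (EUpd x v E) := by
  rintro e he
  rcases List.mem_map.mp he with ⟨e', he', rfl⟩
  simp only
  rw [subst_upd h, subst_upd h]
  exact hE e' he'

lemma EVars_EUpd {x : V} {v : Term F V} {E : List (Term F V × Term F V)}
    (hxv : x ∉ vars v) :
    EVars (EUpd x v E) ⊆ ((EVars E ∪ vars v) \ {x}) := by
  rintro y ⟨e, he, hy⟩
  rcases List.mem_map.mp he with ⟨e', he', rfl⟩
  have key : ∀ w : Term F V, y ∈ vars (subst (upd x v) w) →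
      (y ∈ vars w ∨ y ∈ vars v) ∧ y ≠ x := by
    intro w hw
    rcases Set.mem_iUnion₂.mp (vars_subst_subset _ _ hw) with ⟨z, hz, hyz⟩
    by_cases hzx : z = x
    · subst hzx
      rw [upd_same] at hyz
      exact ⟨Or.inr hyz, fun hyx => hxv (hyx ▸ hyz)⟩
    · rw [upd_ne v hzx] at hyz
      simp only [vars_var, Set.mem_singleton_iff] at hyz
      subst hyz
      exact ⟨Or.inl hz, hzx⟩
  rcases hy with hy | hy
  · rcases key e'.1 hy with ⟨h1, h2⟩
    refine ⟨?_, h2⟩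
    rcases h1 with h1 | h1
    · exact Or.inl ⟨e', he', Or.inl h1⟩
    · exact Or.inr h1
  · rcases key e'.2 hy with ⟨h1, h2⟩
    refine ⟨?_, h2⟩
    rcases h1 with h1 | h1
    · exact Or.inl ⟨e', he', Or.inr h1⟩
    · exact Or.inr h1

/-- The variable-elimination step produces an mgu. -/
lemma elim_mgu {x : V} {v : Term F V} {E' : List (Term F V × Term F V)}
    (hxv : x ∉ vars v) (σ' : V → Term F V) (hσ' : IsMGUE (EUpd x v E') σ') :
    IsMGUE ((Term.var x, v) :: E') (fun y => subst σ' (upd x v y)) := by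
  obtain ⟨hu, hg⟩ := hσ'
  have hδv : subst (upd x v) v = v :=
    subst_eq_self fun y hy => upd_ne v (fun h => hxv (h ▸ hy))
  constructor
  · rintro e he
    rcases List.mem_cons.mp he with rfl | he
    · show subst _ (Term.var x) = subst _ v
      rw [subst_var, upd_same]
      rw [← subst_subst, hδv]
    · show subst _ e.1 = subst _ e.2
      rw [← subst_subst, ← subst_subst]
      exact hu _ (List.mem_map.mpr ⟨e, he, rfl⟩)
  · intro τ hτ
    have hτx : τ x = subst τ v := by
      have := hτ _ (List.mem_cons_self)
      simpa using this
    have hτE : UnifiesE τ (EUpd x v E') :=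
      unifiesE_EUpd hτx fun e he => hτ e (List.mem_cons_of_mem _ he)
    obtain ⟨ρ, hρ⟩ := hg τ hτE
    refine ⟨ρ, fun y => ?_⟩
    show subst ρ (subst σ' (upd x v y)) = τ y
    rw [subst_subst, subst_congr (δ := τ) fun z _ => hρ z]
    by_cases hy : y = x
    · subst hy; rw [upd_same]; exact hτx.symm
    · rw [upd_ne v hy, subst_var]

lemma map_subst_eq_iff_zip {θ : V → Term F V} :
    ∀ {us vs : List (Term F V)}, us.length = vs.length →
      (us.map (subst θ) = vs.map (subst θ) ↔
        ∀ e ∈ us.zip vs, subst θ e.1 = subst θ e.2) := by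
  intro us
  induction us with
  | nil => intro vs h; cases vs with
      | nil => simp
      | cons v vs => simp at h
  | cons u us ih =>
      intro vs h
      cases vs with
      | nil => simp at h
      | cons v vs =>
          simp only [List.length_cons, Nat.add_right_cancel_iff] at h
          simp only [List.map_cons, List.cons.injEq, List.zip_cons_cons, List.mem_cons,
            forall_eq_or_imp, ih h]

/-- Unifiable equation lists have a most general unifier. -/
lemma unify_list (n : ℕ) : ∀ m (E : List (Term F V × Term F V)),
    (EVars E).ncard ≤ n → ESize E ≤ m → (∃ θ, UnifiesE θ E) → ∃ σ, IsMGUE E σ := by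
  induction n using Nat.strong_induction_on with
  | _ n IHn =>
  intro m
  induction m using Nat.strong_induction_on with
  | _ m IHm =>
  intro E hc hs hex
  obtain ⟨θ, hθ⟩ := hex
  cases E with
  | nil =>
      refine ⟨Term.var, ?_, ?_⟩
      · intro e he; cases he
      · intro τ _; exact ⟨τ, fun y => by simp⟩
  | cons e E' =>
      obtain ⟨u, v⟩ := e
      have hθE' : UnifiesE θ E' := fun e he => hθ e (List.mem_cons_of_mem _ he)
      have hθuv : subst θ u = subst θ v := hθ _ (List.mem_cons_self)
      have hcE' : (EVars E').ncard ≤ n := by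
        have := Set.ncard_le_ncard
          (EVars_mono (E := E') (E' := (u, v) :: E') fun e he => List.mem_cons_of_mem _ he)
          (EVars_finite _)
        omega
      -- the variable elimination step
      have elim : ∀ (x : V) (w : Term F V), w ≠ Term.var x → θ x = subst θ w →
          x ∈ EVars ((u, v) :: E') → vars w ⊆ EVars ((u, v) :: E') →
          ∃ σ, IsMGUE ((Term.var x, w) :: E') σ := by
        intro x w hne hθx hxE hwE
        have hocc : x ∉ vars w := fun hocc => occurs_no_unifier hne hocc θ hθx
        have hEsub : EVars (EUpd x w E') ⊆ (EVars ((u, v) :: E')) \ {x} := by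
          refine (EVars_EUpd hocc).trans ?_
          rintro y ⟨hy1, hy2⟩
          refine ⟨?_, hy2⟩
          rcases hy1 with hy1 | hy1
          · exact EVars_mono (fun e he => List.mem_cons_of_mem _ he) hy1
          · exact hwE hy1
        have hlt : (EVars (EUpd x w E')).ncard < n := by
          have h1 : (EVars (EUpd x w E')).ncard ≤ ((EVars ((u, v) :: E')) \ {x}).ncard :=
            Set.ncard_le_ncard hEsub ((EVars_finite _).diff)
          have h2 : ((EVars ((u, v) :: E')) \ {x}).ncard < (EVars ((u, v) :: E')).ncard :=
            Set.ncard_diff_singleton_lt_of_mem hxE (EVars_finite _)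
          omega
        obtain ⟨σ', hσ'⟩ := IHn _ hlt (ESize (EUpd x w E')) (EUpd x w E') le_rfl le_rfl
          ⟨θ, unifiesE_EUpd hθx hθE'⟩
        exact ⟨_, elim_mgu hocc σ' hσ'⟩
      cases u with
      | var x =>
          by_cases hvu : v = Term.var x
          · -- trivial equation, drop it
            subst hvu
            have hsz : ESize E' < m := by
              have h1 := tsize_pos (Term.var (F := F) x)
              have h2 : ESize ((Term.var (F := F) x, Term.var x) :: E')
                  = tsize (Term.var (F := F) x) + tsize (Term.var (F := F) x) + ESize E' :=
                ESize_cons _ _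
              omega
            obtain ⟨σ, hσu, hσg⟩ := IHm _ hsz E' hcE' le_rfl ⟨θ, hθE'⟩
            refine ⟨σ, fun e he => ?_, fun τ hτ => hσg τ fun e he => hτ e (List.mem_cons_of_mem _ he)⟩
            rcases List.mem_cons.mp he with rfl | he
            · rfl
            · exact hσu e he
          · -- eliminate x
            refine elim x v hvu (by simpa using hθuv) ?_ ?_
            · exact ⟨(Term.var x, v), List.mem_cons_self, Or.inl (by simp)⟩
            · intro y hy
              exact ⟨(Term.var x, v), List.mem_cons_self, Or.inr hy⟩
      | app f us =>
        cases v with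
        | var x =>
            -- symmetric variable elimination
            have hne : Term.app f us ≠ Term.var x := fun h => by cases h
            obtain ⟨σ, hσu, hσg⟩ := elim x (Term.app f us) hne (by simpa using hθuv.symm)
              ⟨(Term.app f us, Term.var x), List.mem_cons_self, Or.inr (by simp)⟩
              (fun y hy => ⟨(Term.app f us, Term.var x), List.mem_cons_self, Or.inl hy⟩)
            refine ⟨σ, fun e he => ?_, fun τ hτ => ?_⟩
            · rcases List.mem_cons.mp he with rfl | he
              · exact (hσu _ (List.mem_cons_self)).symm
              · exact hσu e (List.mem_cons_of_mem _ he)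
            · refine hσg τ fun e he => ?_
              rcases List.mem_cons.mp he with rfl | he
              · exact (hτ _ (List.mem_cons_self)).symm
              · exact hτ e (List.mem_cons_of_mem _ he)
        | app g vs =>
            -- decomposition
            rw [subst_app, subst_app, Term.app.injEq] at hθuv
            obtain ⟨rfl, hmap⟩ := hθuv
            have hlen : us.length = vs.length := by
              have := congrArg List.length hmap
              simpa using this
            have hequiv : ∀ τ : V → Term F V,
                UnifiesE τ ((Term.app f us, Term.app f vs) :: E') ↔
                UnifiesE τ (us.zip vs ++ E') := by
              intro τ
              constructor
              · intro hτ e he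
                rcases List.mem_append.mp he with he | he
                · have := hτ _ (List.mem_cons_self)
                  rw [subst_app, subst_app, Term.app.injEq] at this
                  exact (map_subst_eq_iff_zip hlen).mp this.2 e he
                · exact hτ e (List.mem_cons_of_mem _ he)
              · intro hτ e he
                rcases List.mem_cons.mp he with rfl | he
                · simp only [subst_app, Term.app.injEq, true_and]
                  exact (map_subst_eq_iff_zip hlen).mpr
                    fun e he => hτ e (List.mem_append_left _ he)
                · exact hτ e (List.mem_append_right _ he)
            have hcsub : EVars (us.zip vs ++ E') ⊆ EVars ((Term.app f us, Term.app f vs) :: E') := by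
              rintro y ⟨e, he, hy⟩
              rcases List.mem_append.mp he with he | he
              · obtain ⟨h1, h2⟩ := List.of_mem_zip he
                refine ⟨(Term.app f us, Term.app f vs), List.mem_cons_self, ?_⟩
                rcases hy with hy | hy
                · exact Or.inl (by rw [vars_app]; exact mem_varsList.mpr ⟨e.1, h1, hy⟩)
                · exact Or.inr (by rw [vars_app]; exact mem_varsList.mpr ⟨e.2, h2, hy⟩)
              · exact ⟨e, List.mem_cons_of_mem _ he, hy⟩
            have hszlt : ESize (us.zip vs ++ E') < m := by
              have h1 := ESize_zip_le us vs
              have h2 := ESize_append (us.zip vs) E'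
              have h3 : ESize ((Term.app (V := V) f us, Term.app f vs) :: E')
                  = tsize (Term.app (V := V) f us) + tsize (Term.app (V := V) f vs) + ESize E' :=
                ESize_cons _ _
              have h4 : tsize (Term.app (V := V) f us) = 1 + tsizeList us := rfl
              have h5 : tsize (Term.app (V := V) f vs) = 1 + tsizeList vs := rfl
              omega
            have hcr : (EVars (us.zip vs ++ E')).ncard ≤ n :=
              le_trans (Set.ncard_le_ncard hcsub (EVars_finite _)) hc
            obtain ⟨σ, hσu, hσg⟩ := IHm _ hszlt (us.zip vs ++ E') hcr le_rfl
              ⟨θ, (hequiv θ).mp (fun e he => by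
                rcases List.mem_cons.mp he with rfl | he
                · simp only [subst_app, Term.app.injEq, true_and]; exact hmap
                · exact hθE' e he)⟩
            exact ⟨σ, (hequiv σ).mpr hσu, fun τ hτ => hσg τ ((hequiv τ).mp hτ)⟩

/-- Unifiable terms have a most general unifier. -/
lemma exists_mgu {u v : Term F V} (h : ∃ θ, Unifies θ u v) : ∃ σ, IsMGU u v σ := by
  obtain ⟨θ, hθ⟩ := h
  have : ∃ σ, IsMGUE [(u, v)] σ := by
    refine unify_list (EVars [(u, v)]).ncard (ESize [(u, v)]) [(u, v)] le_rfl le_rfl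
      ⟨θ, fun e he => ?_⟩
    rcases List.mem_cons.mp he with rfl | he
    · exact hθ
    · cases he
  obtain ⟨σ, hσu, hσg⟩ := this
  refine ⟨σ, hσu _ (List.mem_cons_self), fun τ hτ => hσg τ fun e he => ?_⟩
  rcases List.mem_cons.mp he with rfl | he
  · exact hτ
  · cases he

end Aux

/-- outermost lifting lemma.
If `αs` rewrites outermost at the non-variable position `p` of `s` with rule `l→r` to `t'`,
then `s` outermost-narrows at `p` with `l→r` and a constrained substitution
`σ = σ₀ ∧ ⋀_j ¬σ_j` into some `s'`, and there is a `β` with `βs' = t'`, `βσ₀ = α` on `Y`,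
and `β` satisfies every `¬σ_j`, where the `σ_j` range over all most general unifiers of
`σ₀(s|_{p'})` with a (renamed, variable-disjoint) left-hand side of a rule of `R`,
for all positions `p'` of `s` that are strict prefixes of `p`. -/
theorem outermost_lifting {F V : Type*}
    (R : List (Rule F V)) (hRS : IsRS R)
    (s : Term F V) (α : V → Term F V) (hα : GroundSubst α)
    (Y : Set V) (hYs : vars s ⊆ Y) (hYd : SDom α ⊆ Y)
    -- the variables of the rules are renamed away from `Y`
    (hYR : ∀ ρ ∈ R, ∀ x ∈ vars ρ.lhs, x ∉ Y)
    (l r : Term F V) (hrule : (⟨l, r⟩ : Rule F V) ∈ R)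
    (p : List ℕ) (sp : Term F V)
    (hsp : subtermAt p s = some sp) (hnv : ∀ x : V, sp ≠ Term.var x)
    (t' : Term F V)
    -- `αs` rewrites outermost at position `p` with rule `l→r` to `t'`
    (hstep : RewriteAtWith l r p (subst α s) t')
    (hout : ∀ q, StrictBelow q p → ¬ ReducibleAt R (subst α s) q) :
    ∃ (s' : Term F V) (β σ0 : V → Term F V),
      -- (1) `s` outermost-narrows to `s'` at `p` with rule `l→r` and mgu `σ₀`
      (IsMGU sp l σ0 ∧ ∃ w, replaceAt p s r = some w ∧ s' = subst σ0 w) ∧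
      -- (2) `βs' = t'`
      subst β s' = t' ∧
      -- (3) `βσ₀ = α` on `Y`
      (∀ x ∈ Y, subst β (σ0 x) = α x) ∧
      -- (4) `β` satisfies `¬σ_j` for every mgu `σ_j` of `σ₀(s|_{p'})` with a renamed
      -- left-hand side of a rule of `R`, `p'` a strict prefix position of `p` in `s`
      (∀ p' : List ℕ, StrictBelow p' p → ∀ sp', subtermAt p' s = some sp' →
        ∀ ρ' ∈ R, ∀ ξ : V → V, Function.Injective ξ →
          (∀ x ∈ vars (subst (fun y => Term.var (ξ y)) ρ'.lhs),
              x ∉ Y ∧ x ∉ vars (subst σ0 sp')) →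
          ∀ ν : V → Term F V,
            IsMGU (subst σ0 sp') (subst (fun y => Term.var (ξ y)) ρ'.lhs) ν →
            ∃ x : V, β x ≠ subst β (ν x)) := by
  classical
  obtain ⟨τ, hτ1, hτ2⟩ := hstep
  have hαsp : subtermAt p (subst α s) = some (subst α sp) := subtermAt_subst α hsp
  have heq : subst α sp = subst τ l := by
    rw [hαsp] at hτ1
    exact Option.some.inj hτ1
  -- the combined substitution γ
  set γ : V → Term F V := fun x => if x ∈ Y then α x else τ x with hγdef
  have hγY : ∀ x ∈ Y, γ x = α x := fun x hx => if_pos hx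
  have hγN : ∀ x ∉ Y, γ x = τ x := fun x hx => if_neg hx
  have hlY : ∀ x ∈ vars l, x ∉ Y := hYR ⟨l, r⟩ hrule
  have hrl : vars r ⊆ vars l := (hRS ⟨l, r⟩ hrule).2
  have hγuni : Unifies γ sp l := by
    show subst γ sp = subst γ l
    rw [subst_congr (δ := α) fun x hx => hγY x (hYs (vars_subtermAt hsp hx)),
      subst_congr (θ := γ) (δ := τ) fun x hx => hγN x (hlY x hx), heq]
  obtain ⟨σ0, hmgu⟩ := exists_mgu ⟨γ, hγuni⟩
  obtain ⟨β, hβ⟩ := hmgu.2 γ hγuni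
  obtain ⟨w, hw⟩ := replaceAt_isSome hsp r
  refine ⟨subst σ0 w, β, σ0, ⟨hmgu, w, hw, rfl⟩, ?_, ?_, ?_⟩
  · -- βs' = t'
    have h1 : subst β (subst σ0 w) = subst γ w := by
      rw [subst_subst]
      exact subst_congr fun x _ => hβ x
    have h2 : replaceAt p (subst γ s) (subst γ r) = some (subst γ w) :=
      replaceAt_subst γ hw
    rw [subst_congr (θ := γ) (δ := α) fun x hx => hγY x (hYs hx),
      subst_congr (θ := γ) (δ := τ) (t := r) fun x hx => hγN x (hlY x (hrl hx))] at h2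
    rw [h2] at hτ2
    rw [h1]
    exact Option.some.inj hτ2
  · -- βσ0 = α on Y
    intro x hx
    rw [hβ x]
    exact hγY x hx
  · -- negative constraints
    intro p' hp' sp' hsp' ρ' hρ' ξ hinj hfresh ν hν
    by_contra hcon
    push_neg at hcon
    apply hout p' hp'
    have hβν : ∀ t : Term F V, subst β (subst ν t) = subst β t := by
      intro t
      rw [subst_subst]
      exact subst_congr fun x _ => (hcon x).symm
    have hkey : subst β (subst σ0 sp') = subst β (subst (fun y => Term.var (ξ y)) ρ'.lhs) := by
      rw [← hβν (subst σ0 sp'), ← hβν (subst (fun y => Term.var (ξ y)) ρ'.lhs), hν.1]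
    have hL : subst β (subst σ0 sp') = subst α sp' := by
      rw [subst_subst, subst_congr (δ := γ) fun x _ => hβ x]
      exact subst_congr fun x hx => hγY x (hYs (vars_subtermAt hsp' hx))
    have hR : subst β (subst (fun y => Term.var (ξ y)) ρ'.lhs)
        = subst (fun y => β (ξ y)) ρ'.lhs := by
      rw [subst_subst]
      exact subst_congr fun x _ => by simp
    have hsub' : subtermAt p' (subst α s) = some (subst α sp') := subtermAt_subst α hsp'
    obtain ⟨w'', hw''⟩ := replaceAt_isSome hsub' (subst (fun y => β (ξ y)) ρ'.rhs)
    refine ⟨w'', ρ', hρ', fun y => β (ξ y), ?_, hw''⟩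
    rw [hsub', ← hR, ← hkey, hL]

end TRS
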